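/- The alternating group A_10 is 11-semi-rational: for every x ∈ A_10, every generator of the cyclic subgroup generated by x is conjugate in A_10 to x or to x^11. -/

import Mathlib

set_option maxRecDepth 100000

namespace AltTenSR

open Equiv Equiv.Perm

/-- Evenly conjugate in `S₁₀`. -/
def EC (a b : Equiv.Perm (Fin 10)) : Prop :=
  ∃ g : Equiv.Perm (Fin 10), Equiv.Perm.sign g = 1 ∧ g * a * g⁻¹ = b

instance (f g : Equiv.Perm (Fin 10)) : Decidable (f.Disjoint g) :=
  decidable_of_iff (∀ x, f x = x ∨ g x = x) Iff.rfl

theorem cycleType_formPerm (l : List (Fin 10)) (h : l.Nodup) (h2 : 2 ≤ l.length) :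
    (List.formPerm l).cycleType = {l.length} := by
  rw [(List.isCycle_formPerm h h2).cycleType,
    List.support_formPerm_of_nodup l h (fun x hx => by subst hx; simp at h2),
    List.toFinset_card_of_nodup h]

theorem cycleType_mul (l : List (Fin 10)) (g : Equiv.Perm (Fin 10)) (h : l.Nodup)
    (h2 : 2 ≤ l.length) (hd : (List.formPerm l).Disjoint g) :
    (List.formPerm l * g).cycleType = l.length ::ₘ g.cycleType := by
  rw [hd.cycleType_mul, cycleType_formPerm l h h2, Multiset.singleton_add]

def L_all : List (Multiset ℕ) := [(0 : Multiset ℕ), ({2} : Multiset ℕ), ({3} : Multiset ℕ), ({2,2} : Multiset ℕ), ({4} : Multiset ℕ), ({3,2} : Multiset ℕ), ({5} : Multiset ℕ), ({2,2,2} : Multiset ℕ), ({3,3} : Multiset ℕ), ({4,2} : Multiset ℕ), ({6} : Multiset ℕ), ({3,2,2} : Multiset ℕ), ({4,3} : Multiset ℕ), ({5,2} : Multiset ℕ), ({7} : Multiset ℕ), ({2,2,2,2} : Multiset ℕ), ({3,3,2} : Multiset ℕ), ({4,2,2} : Multiset ℕ), ({4,4} : Multiset ℕ), ({5,3} : Multiset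 ℕ), ({6,2} : Multiset ℕ), ({8} : Multiset ℕ), ({3,2,2,2} : Multiset ℕ), ({3,3,3} : Multiset ℕ), ({4,3,2} : Multiset ℕ), ({5,2,2} : Multiset ℕ), ({5,4} : Multiset ℕ), ({6,3} : Multiset ℕ), ({7,2} : Multiset ℕ), ({9} : Multiset ℕ), ({2,2,2,2,2} : Multiset ℕ), ({3,3,2,2} : Multiset ℕ), ({4,2,2,2} : Multiset ℕ), ({4,3,3} : Multiset ℕ), ({4,4,2} : Multiset ℕ), ({5,3,2} : Multiset ℕ), ({5,5} : Multiset ℕ), ({6,2,2} : Multiset ℕ), ({6,4} : Multiset ℕ), ({7,3} : Multiset ℕ), ({8,2} : Multiset ℕ), ({10} : Multiset ℕ)]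

def L_even : List (Multiset ℕ) := [(0 : Multiset ℕ), ({3} : Multiset ℕ), ({2,2} : Multiset ℕ), ({5} : Multiset ℕ), ({3,3} : Multiset ℕ), ({4,2} : Multiset ℕ), ({3,2,2} : Multiset ℕ), ({7} : Multiset ℕ), ({2,2,2,2} : Multiset ℕ), ({4,4} : Multiset ℕ), ({5,3} : Multiset ℕ), ({6,2} : Multiset ℕ), ({3,3,3} : Multiset ℕ), ({4,3,2} : Multiset ℕ), ({5,2,2} : Multiset ℕ), ({9} : Multiset ℕ), ({3,3,2,2} : Multiset ℕ), ({4,2,2,2} : Multiset ℕ), ({5,5} : Multiset ℕ), ({6,4} : Multiset ℕ), ({7,3} : Multiset ℕ), ({8,2} : Multiset ℕ)]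


theorem helper1 : ∀ a : ℕ, a < 11 → 2 ≤ a → ({a} : Multiset ℕ) ∈ L_all := by decide

theorem helper2 : ∀ a : ℕ, a < 11 → 2 ≤ a → ∀ t ∈ L_all, a + t.sum ≤ 10 →
    (a ::ₘ t) ∈ L_all := by decide

theorem helper3 : ∀ t ∈ L_all, ((-1 : ℤˣ) ^ (t.sum + Multiset.card t) = 1) → t ∈ L_even := by
  decide

theorem mem_L_all (σ : Equiv.Perm (Fin 10)) : σ.cycleType ∈ L_all := by
  induction σ using Equiv.Perm.cycle_induction_on with
  | base_one => rw [Equiv.Perm.cycleType_one]; decide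
  | base_cycles σ hσ =>
    rw [hσ.cycleType]
    have h10 : σ.support.card ≤ 10 := le_trans (Finset.card_le_univ _) (by simp)
    exact helper1 _ (by omega) hσ.two_le_card_support
  | induction_disjoint σ τ hd hc hPσ hPτ =>
    rw [hd.cycleType_mul, hc.cycleType, Multiset.singleton_add]
    have hsum : σ.support.card + τ.cycleType.sum ≤ 10 := by
      rw [Equiv.Perm.sum_cycleType]
      have h1 : (σ * τ).support.card ≤ 10 := le_trans (Finset.card_le_univ _) (by simp)
      rwa [hd.card_support_mul] at h1
    exact helper2 _ (by omega) hc.two_le_card_support _ hPτ hsum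

theorem classify (σ : Equiv.Perm (Fin 10)) (h : Equiv.Perm.sign σ = 1) :
    σ.cycleType ∈ L_even := by
  refine helper3 _ (mem_L_all σ) ?_
  rw [← Equiv.Perm.sign_of_cycleType]
  exact h

theorem liftEC (x y : alternatingGroup (Fin 10)) (h : EC (↑y) (↑x)) : IsConj y x := by
  obtain ⟨g, hg1, hg2⟩ := h
  refine isConj_iff.2 ⟨⟨g, Equiv.Perm.mem_alternatingGroup.2 hg1⟩, ?_⟩
  apply Subtype.ext
  push_cast
  exact hg2

theorem of_rep {c σ : Equiv.Perm (Fin 10)} (h : c.cycleType = σ.cycleType)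
    (H : ∀ j, j < orderOf c → Nat.Coprime j (orderOf c) → EC (c ^ j) c ∨ EC (c ^ j) (c ^ 11))
    {k : ℕ} (hk : k < orderOf σ) (hco : Nat.Coprime k (orderOf σ)) :
    EC (σ ^ k) σ ∨ EC (σ ^ k) (σ ^ 11) := by
  obtain ⟨g, hg⟩ := isConj_iff.1 (Equiv.Perm.isConj_iff_cycleType_eq.2 h)
  have horder : orderOf c = orderOf σ := by
    rw [← hg]
    exact (orderOf_injective (MulAut.conj g).toMonoidHom (MulEquiv.injective _) c).symm
  rcases H k (by rwa [horder]) (by rwa [horder]) with ⟨w, hw1, hw2⟩ | ⟨w, hw1, hw2⟩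
  · left
    refine ⟨g * w * g⁻¹, by simp [hw1], ?_⟩
    have key : (g * w * g⁻¹) * (g * c ^ k * g⁻¹) * (g * w * g⁻¹)⁻¹
        = g * (w * c ^ k * w⁻¹) * g⁻¹ := by group
    rw [← hg, conj_pow, key, hw2]
  · right
    refine ⟨g * w * g⁻¹, by simp [hw1], ?_⟩
    have key : (g * w * g⁻¹) * (g * c ^ k * g⁻¹) * (g * w * g⁻¹)⁻¹
        = g * (w * c ^ k * w⁻¹) * g⁻¹ := by group
    rw [← hg, conj_pow, conj_pow, key, hw2]

def c0 : Equiv.Perm (Fin 10) := (1 : Equiv.Perm (Fin 10))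

theorem hct0 : Equiv.Perm.cycleType c0 = (0 : Multiset ℕ) := Equiv.Perm.cycleType_one

theorem hord0 : orderOf c0 = 1 := orderOf_one

theorem hks0 : ∀ k, k < 1 → Nat.Coprime k 1 → EC (c0 ^ k) c0 ∨ EC (c0 ^ k) (c0 ^ 11) := by
  intro k hk hco
  interval_cases k
  · exact Or.inl ⟨(1 : Equiv.Perm (Fin 10)), by decide, by decide⟩

def c1 : Equiv.Perm (Fin 10) := (List.formPerm [0,1,2])

theorem hct1 : Equiv.Perm.cycleType c1 = ({3} : Multiset ℕ) := by
  unfold c1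
  rw [cycleType_formPerm _ (by decide) (by decide)]
  decide

theorem hord1 : orderOf c1 = 3 := by
  rw [← Equiv.Perm.lcm_cycleType, hct1]; decide

theorem hks1 : ∀ k, k < 3 → Nat.Coprime k 3 → EC (c1 ^ k) c1 ∨ EC (c1 ^ k) (c1 ^ 11) := by
  intro k hk hco
  interval_cases k
  · exact absurd hco (by decide)
  · exact Or.inl ⟨(1 : Equiv.Perm (Fin 10)), by decide, by decide⟩
  · exact Or.inl ⟨(List.formPerm [1,2] * (List.formPerm [8,9])), by decide, by decide⟩

def c2 : Equiv.Perm (Fin 10) := (List.formPerm [0,1] * (List.formPerm [2,3]))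

theorem hct2 : Equiv.Perm.cycleType c2 = ({2,2} : Multiset ℕ) := by
  unfold c2
  rw [cycleType_mul _ _ (by decide) (by decide) (by decide), cycleType_formPerm _ (by decide) (by decide)]
  decide

theorem hord2 : orderOf c2 = 2 := by
  rw [← Equiv.Perm.lcm_cycleType, hct2]; decide

theorem hks2 : ∀ k, k < 2 → Nat.Coprime k 2 → EC (c2 ^ k) c2 ∨ EC (c2 ^ k) (c2 ^ 11) := by
  intro k hk hco
  interval_cases k
  · exact absurd hco (by decide)
  · exact Or.inl ⟨(1 : Equiv.Perm (Fin 10)), by decide, by decide⟩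

def c3 : Equiv.Perm (Fin 10) := (List.formPerm [0,1,2,3,4])

theorem hct3 : Equiv.Perm.cycleType c3 = ({5} : Multiset ℕ) := by
  unfold c3
  rw [cycleType_formPerm _ (by decide) (by decide)]
  decide

theorem hord3 : orderOf c3 = 5 := by
  rw [← Equiv.Perm.lcm_cycleType, hct3]; decide

theorem hks3 : ∀ k, k < 5 → Nat.Coprime k 5 → EC (c3 ^ k) c3 ∨ EC (c3 ^ k) (c3 ^ 11) := by
  intro k hk hco
  interval_cases k
  · exact absurd hco (by decide)
  · exact Or.inl ⟨(1 : Equiv.Perm (Fin 10)), by decide, by decide⟩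
  · exact Or.inl ⟨(List.formPerm [1,3,4,2] * (List.formPerm [8,9])), by decide, by decide⟩
  · exact Or.inl ⟨(List.formPerm [1,2,4,3] * (List.formPerm [8,9])), by decide, by decide⟩
  · exact Or.inl ⟨(List.formPerm [1,4] * (List.formPerm [2,3])), by decide, by decide⟩

def c4 : Equiv.Perm (Fin 10) := (List.formPerm [0,1,2] * (List.formPerm [3,4,5]))

theorem hct4 : Equiv.Perm.cycleType c4 = ({3,3} : Multiset ℕ) := by
  unfold c4
  rw [cycleType_mul _ _ (by decide) (by decide) (by decide), cycleType_formPerm _ (by decide) (by decide)]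
  decide

theorem hord4 : orderOf c4 = 3 := by
  rw [← Equiv.Perm.lcm_cycleType, hct4]; decide

theorem hks4 : ∀ k, k < 3 → Nat.Coprime k 3 → EC (c4 ^ k) c4 ∨ EC (c4 ^ k) (c4 ^ 11) := by
  intro k hk hco
  interval_cases k
  · exact absurd hco (by decide)
  · exact Or.inl ⟨(1 : Equiv.Perm (Fin 10)), by decide, by decide⟩
  · exact Or.inl ⟨(List.formPerm [1,2] * (List.formPerm [4,5])), by decide, by decide⟩

def c5 : Equiv.Perm (Fin 10) := (List.formPerm [0,1,2,3] * (List.formPerm [4,5]))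

theorem hct5 : Equiv.Perm.cycleType c5 = ({4,2} : Multiset ℕ) := by
  unfold c5
  rw [cycleType_mul _ _ (by decide) (by decide) (by decide), cycleType_formPerm _ (by decide) (by decide)]
  decide

theorem hord5 : orderOf c5 = 4 := by
  rw [← Equiv.Perm.lcm_cycleType, hct5]; decide

theorem hks5 : ∀ k, k < 4 → Nat.Coprime k 4 → EC (c5 ^ k) c5 ∨ EC (c5 ^ k) (c5 ^ 11) := by
  intro k hk hco
  interval_cases k
  · exact absurd hco (by decide)
  · exact Or.inl ⟨(1 : Equiv.Perm (Fin 10)), by decide, by decide⟩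
  · exact absurd hco (by decide)
  · exact Or.inl ⟨(List.formPerm [0,1] * (List.formPerm [2,3])), by decide, by decide⟩

def c6 : Equiv.Perm (Fin 10) := (List.formPerm [0,1,2] * (List.formPerm [3,4] * (List.formPerm [5,6])))

theorem hct6 : Equiv.Perm.cycleType c6 = ({3,2,2} : Multiset ℕ) := by
  unfold c6
  rw [cycleType_mul _ _ (by decide) (by decide) (by decide), cycleType_mul _ _ (by decide) (by decide) (by decide), cycleType_formPerm _ (by decide) (by decide)]
  decide

theorem hord6 : orderOf c6 = 6 := by
  rw [← Equiv.Perm.lcm_cycleType, hct6]; decide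

theorem hks6 : ∀ k, k < 6 → Nat.Coprime k 6 → EC (c6 ^ k) c6 ∨ EC (c6 ^ k) (c6 ^ 11) := by
  intro k hk hco
  interval_cases k
  · exact absurd hco (by decide)
  · exact Or.inl ⟨(1 : Equiv.Perm (Fin 10)), by decide, by decide⟩
  · exact absurd hco (by decide)
  · exact absurd hco (by decide)
  · exact absurd hco (by decide)
  · exact Or.inl ⟨(List.formPerm [1,2] * (List.formPerm [5,6])), by decide, by decide⟩

def c7 : Equiv.Perm (Fin 10) := (List.formPerm [0,1,2,3,4,5,6])

theorem hct7 : Equiv.Perm.cycleType c7 = ({7} : Multiset ℕ) := by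
  unfold c7
  rw [cycleType_formPerm _ (by decide) (by decide)]
  decide

theorem hord7 : orderOf c7 = 7 := by
  rw [← Equiv.Perm.lcm_cycleType, hct7]; decide

theorem hks7 : ∀ k, k < 7 → Nat.Coprime k 7 → EC (c7 ^ k) c7 ∨ EC (c7 ^ k) (c7 ^ 11) := by
  intro k hk hco
  interval_cases k
  · exact absurd hco (by decide)
  · exact Or.inl ⟨(1 : Equiv.Perm (Fin 10)), by decide, by decide⟩
  · exact Or.inl ⟨(List.formPerm [1,4,2] * (List.formPerm [3,5,6])), by decide, by decide⟩
  · exact Or.inl ⟨(List.formPerm [1,5,4,6,2,3] * (List.formPerm [8,9])), by decide, by decide⟩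
  · exact Or.inl ⟨(List.formPerm [1,2,4] * (List.formPerm [3,6,5])), by decide, by decide⟩
  · exact Or.inl ⟨(List.formPerm [1,3,2,6,4,5] * (List.formPerm [8,9])), by decide, by decide⟩
  · exact Or.inl ⟨(List.formPerm [1,6] * (List.formPerm [2,5] * (List.formPerm [3,4] * (List.formPerm [8,9])))), by decide, by decide⟩

def c8 : Equiv.Perm (Fin 10) := (List.formPerm [0,1] * (List.formPerm [2,3] * (List.formPerm [4,5] * (List.formPerm [6,7]))))

theorem hct8 : Equiv.Perm.cycleType c8 = ({2,2,2,2} : Multiset ℕ) := by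
  unfold c8
  rw [cycleType_mul _ _ (by decide) (by decide) (by decide), cycleType_mul _ _ (by decide) (by decide) (by decide), cycleType_mul _ _ (by decide) (by decide) (by decide), cycleType_formPerm _ (by decide) (by decide)]
  decide

theorem hord8 : orderOf c8 = 2 := by
  rw [← Equiv.Perm.lcm_cycleType, hct8]; decide

theorem hks8 : ∀ k, k < 2 → Nat.Coprime k 2 → EC (c8 ^ k) c8 ∨ EC (c8 ^ k) (c8 ^ 11) := by
  intro k hk hco
  interval_cases k
  · exact absurd hco (by decide)
  · exact Or.inl ⟨(1 : Equiv.Perm (Fin 10)), by decide, by decide⟩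

def c9 : Equiv.Perm (Fin 10) := (List.formPerm [0,1,2,3] * (List.formPerm [4,5,6,7]))

theorem hct9 : Equiv.Perm.cycleType c9 = ({4,4} : Multiset ℕ) := by
  unfold c9
  rw [cycleType_mul _ _ (by decide) (by decide) (by decide), cycleType_formPerm _ (by decide) (by decide)]
  decide

theorem hord9 : orderOf c9 = 4 := by
  rw [← Equiv.Perm.lcm_cycleType, hct9]; decide

theorem hks9 : ∀ k, k < 4 → Nat.Coprime k 4 → EC (c9 ^ k) c9 ∨ EC (c9 ^ k) (c9 ^ 11) := by
  intro k hk hco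
  interval_cases k
  · exact absurd hco (by decide)
  · exact Or.inl ⟨(1 : Equiv.Perm (Fin 10)), by decide, by decide⟩
  · exact absurd hco (by decide)
  · exact Or.inl ⟨(List.formPerm [1,3] * (List.formPerm [5,7])), by decide, by decide⟩

def c10 : Equiv.Perm (Fin 10) := (List.formPerm [0,1,2,3,4] * (List.formPerm [5,6,7]))

theorem hct10 : Equiv.Perm.cycleType c10 = ({5,3} : Multiset ℕ) := by
  unfold c10
  rw [cycleType_mul _ _ (by decide) (by decide) (by decide), cycleType_formPerm _ (by decide) (by decide)]
  decide

theorem hord10 : orderOf c10 = 15 := by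
  rw [← Equiv.Perm.lcm_cycleType, hct10]; decide

theorem hks10 : ∀ k, k < 15 → Nat.Coprime k 15 → EC (c10 ^ k) c10 ∨ EC (c10 ^ k) (c10 ^ 11) := by
  intro k hk hco
  interval_cases k
  · exact absurd hco (by decide)
  · exact Or.inl ⟨(1 : Equiv.Perm (Fin 10)), by decide, by decide⟩
  · exact Or.inl ⟨(List.formPerm [1,3,4,2] * (List.formPerm [6,7])), by decide, by decide⟩
  · exact absurd hco (by decide)
  · exact Or.inl ⟨(List.formPerm [1,4] * (List.formPerm [2,3])), by decide, by decide⟩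
  · exact absurd hco (by decide)
  · exact absurd hco (by decide)
  · exact Or.inl ⟨(List.formPerm [1,3,4,2] * (List.formPerm [8,9])), by decide, by decide⟩
  · exact Or.inl ⟨(List.formPerm [1,2,4,3] * (List.formPerm [6,7])), by decide, by decide⟩
  · exact absurd hco (by decide)
  · exact absurd hco (by decide)
  · exact Or.inl ⟨(List.formPerm [6,7] * (List.formPerm [8,9])), by decide, by decide⟩
  · exact absurd hco (by decide)
  · exact Or.inl ⟨(List.formPerm [1,2,4,3] * (List.formPerm [8,9])), by decide, by decide⟩
  · exact Or.inl ⟨(List.formPerm [1,4] * (List.formPerm [2,3] * (List.formPerm [6,7] * (List.formPerm [8,9])))), by decide, by decide⟩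

def c11 : Equiv.Perm (Fin 10) := (List.formPerm [0,1,2,3,4,5] * (List.formPerm [6,7]))

theorem hct11 : Equiv.Perm.cycleType c11 = ({6,2} : Multiset ℕ) := by
  unfold c11
  rw [cycleType_mul _ _ (by decide) (by decide) (by decide), cycleType_formPerm _ (by decide) (by decide)]
  decide

theorem hord11 : orderOf c11 = 6 := by
  rw [← Equiv.Perm.lcm_cycleType, hct11]; decide

theorem hks11 : ∀ k, k < 6 → Nat.Coprime k 6 → EC (c11 ^ k) c11 ∨ EC (c11 ^ k) (c11 ^ 11) := by
  intro k hk hco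
  interval_cases k
  · exact absurd hco (by decide)
  · exact Or.inl ⟨(1 : Equiv.Perm (Fin 10)), by decide, by decide⟩
  · exact absurd hco (by decide)
  · exact absurd hco (by decide)
  · exact absurd hco (by decide)
  · exact Or.inl ⟨(List.formPerm [1,5] * (List.formPerm [2,4])), by decide, by decide⟩

def c12 : Equiv.Perm (Fin 10) := (List.formPerm [0,1,2] * (List.formPerm [3,4,5] * (List.formPerm [6,7,8])))

theorem hct12 : Equiv.Perm.cycleType c12 = ({3,3,3} : Multiset ℕ) := by
  unfold c12
  rw [cycleType_mul _ _ (by decide) (by decide) (by decide), cycleType_mul _ _ (by decide) (by decide) (by decide), cycleType_formPerm _ (by decide) (by decide)]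
  decide

theorem hord12 : orderOf c12 = 3 := by
  rw [← Equiv.Perm.lcm_cycleType, hct12]; decide

theorem hks12 : ∀ k, k < 3 → Nat.Coprime k 3 → EC (c12 ^ k) c12 ∨ EC (c12 ^ k) (c12 ^ 11) := by
  intro k hk hco
  interval_cases k
  · exact absurd hco (by decide)
  · exact Or.inl ⟨(1 : Equiv.Perm (Fin 10)), by decide, by decide⟩
  · exact Or.inl ⟨(List.formPerm [1,2] * (List.formPerm [3,6] * (List.formPerm [4,8] * (List.formPerm [5,7])))), by decide, by decide⟩

def c13 : Equiv.Perm (Fin 10) := (List.formPerm [0,1,2,3] * (List.formPerm [4,5,6] * (List.formPerm [7,8])))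

theorem hct13 : Equiv.Perm.cycleType c13 = ({4,3,2} : Multiset ℕ) := by
  unfold c13
  rw [cycleType_mul _ _ (by decide) (by decide) (by decide), cycleType_mul _ _ (by decide) (by decide) (by decide), cycleType_formPerm _ (by decide) (by decide)]
  decide

theorem hord13 : orderOf c13 = 12 := by
  rw [← Equiv.Perm.lcm_cycleType, hct13]; decide

theorem hks13 : ∀ k, k < 12 → Nat.Coprime k 12 → EC (c13 ^ k) c13 ∨ EC (c13 ^ k) (c13 ^ 11) := by
  intro k hk hco
  interval_cases k
  · exact absurd hco (by decide)
  · exact Or.inl ⟨(1 : Equiv.Perm (Fin 10)), by decide, by decide⟩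
  · exact absurd hco (by decide)
  · exact absurd hco (by decide)
  · exact absurd hco (by decide)
  · exact Or.inl ⟨(List.formPerm [0,1,2,3] * (List.formPerm [5,6])), by decide, by decide⟩
  · exact absurd hco (by decide)
  · exact Or.inl ⟨(List.formPerm [0,1] * (List.formPerm [2,3])), by decide, by decide⟩
  · exact absurd hco (by decide)
  · exact absurd hco (by decide)
  · exact absurd hco (by decide)
  · exact Or.inl ⟨(List.formPerm [1,3] * (List.formPerm [5,6])), by decide, by decide⟩

def c14 : Equiv.Perm (Fin 10) := (List.formPerm [0,1,2,3,4] * (List.formPerm [5,6] * (List.formPerm [7,8])))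

theorem hct14 : Equiv.Perm.cycleType c14 = ({5,2,2} : Multiset ℕ) := by
  unfold c14
  rw [cycleType_mul _ _ (by decide) (by decide) (by decide), cycleType_mul _ _ (by decide) (by decide) (by decide), cycleType_formPerm _ (by decide) (by decide)]
  decide

theorem hord14 : orderOf c14 = 10 := by
  rw [← Equiv.Perm.lcm_cycleType, hct14]; decide

theorem hks14 : ∀ k, k < 10 → Nat.Coprime k 10 → EC (c14 ^ k) c14 ∨ EC (c14 ^ k) (c14 ^ 11) := by
  intro k hk hco
  interval_cases k
  · exact absurd hco (by decide)
  · exact Or.inl ⟨(1 : Equiv.Perm (Fin 10)), by decide, by decide⟩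
  · exact absurd hco (by decide)
  · exact Or.inl ⟨(List.formPerm [1,2,4,3] * (List.formPerm [7,8])), by decide, by decide⟩
  · exact absurd hco (by decide)
  · exact absurd hco (by decide)
  · exact absurd hco (by decide)
  · exact Or.inl ⟨(List.formPerm [1,3,4,2] * (List.formPerm [7,8])), by decide, by decide⟩
  · exact absurd hco (by decide)
  · exact Or.inl ⟨(List.formPerm [1,4] * (List.formPerm [2,3])), by decide, by decide⟩

def c15 : Equiv.Perm (Fin 10) := (List.formPerm [0,1,2,3,4,5,6,7,8])

theorem hct15 : Equiv.Perm.cycleType c15 = ({9} : Multiset ℕ) := by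
  unfold c15
  rw [cycleType_formPerm _ (by decide) (by decide)]
  decide

theorem hord15 : orderOf c15 = 9 := by
  rw [← Equiv.Perm.lcm_cycleType, hct15]; decide

theorem hks15 : ∀ k, k < 9 → Nat.Coprime k 9 → EC (c15 ^ k) c15 ∨ EC (c15 ^ k) (c15 ^ 11) := by
  intro k hk hco
  interval_cases k
  · exact absurd hco (by decide)
  · exact Or.inl ⟨(1 : Equiv.Perm (Fin 10)), by decide, by decide⟩
  · exact Or.inl ⟨(List.formPerm [1,5,7,8,4,2] * (List.formPerm [3,6])), by decide, by decide⟩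
  · exact absurd hco (by decide)
  · exact Or.inl ⟨(List.formPerm [1,7,4] * (List.formPerm [2,5,8])), by decide, by decide⟩
  · exact Or.inl ⟨(List.formPerm [1,2,4,8,7,5] * (List.formPerm [3,6])), by decide, by decide⟩
  · exact absurd hco (by decide)
  · exact Or.inl ⟨(List.formPerm [1,4,7] * (List.formPerm [2,8,5])), by decide, by decide⟩
  · exact Or.inl ⟨(List.formPerm [1,8] * (List.formPerm [2,7] * (List.formPerm [3,6] * (List.formPerm [4,5])))), by decide, by decide⟩

def c16 : Equiv.Perm (Fin 10) := (List.formPerm [0,1,2] * (List.formPerm [3,4,5] * (List.formPerm [6,7] * (List.formPerm [8,9]))))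

theorem hct16 : Equiv.Perm.cycleType c16 = ({3,3,2,2} : Multiset ℕ) := by
  unfold c16
  rw [cycleType_mul _ _ (by decide) (by decide) (by decide), cycleType_mul _ _ (by decide) (by decide) (by decide), cycleType_mul _ _ (by decide) (by decide) (by decide), cycleType_formPerm _ (by decide) (by decide)]
  decide

theorem hord16 : orderOf c16 = 6 := by
  rw [← Equiv.Perm.lcm_cycleType, hct16]; decide

theorem hks16 : ∀ k, k < 6 → Nat.Coprime k 6 → EC (c16 ^ k) c16 ∨ EC (c16 ^ k) (c16 ^ 11) := by
  intro k hk hco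
  interval_cases k
  · exact absurd hco (by decide)
  · exact Or.inl ⟨(1 : Equiv.Perm (Fin 10)), by decide, by decide⟩
  · exact absurd hco (by decide)
  · exact absurd hco (by decide)
  · exact absurd hco (by decide)
  · exact Or.inl ⟨(List.formPerm [1,2] * (List.formPerm [4,5])), by decide, by decide⟩

def c17 : Equiv.Perm (Fin 10) := (List.formPerm [0,1,2,3] * (List.formPerm [4,5] * (List.formPerm [6,7] * (List.formPerm [8,9]))))

theorem hct17 : Equiv.Perm.cycleType c17 = ({4,2,2,2} : Multiset ℕ) := by
  unfold c17
  rw [cycleType_mul _ _ (by decide) (by decide) (by decide), cycleType_mul _ _ (by decide) (by decide) (by decide), cycleType_mul _ _ (by decide) (by decide) (by decide), cycleType_formPerm _ (by decide) (by decide)]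
  decide

theorem hord17 : orderOf c17 = 4 := by
  rw [← Equiv.Perm.lcm_cycleType, hct17]; decide

theorem hks17 : ∀ k, k < 4 → Nat.Coprime k 4 → EC (c17 ^ k) c17 ∨ EC (c17 ^ k) (c17 ^ 11) := by
  intro k hk hco
  interval_cases k
  · exact absurd hco (by decide)
  · exact Or.inl ⟨(1 : Equiv.Perm (Fin 10)), by decide, by decide⟩
  · exact absurd hco (by decide)
  · exact Or.inl ⟨(List.formPerm [0,1] * (List.formPerm [2,3])), by decide, by decide⟩

def c18 : Equiv.Perm (Fin 10) := (List.formPerm [0,1,2,3,4] * (List.formPerm [5,6,7,8,9]))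

theorem hct18 : Equiv.Perm.cycleType c18 = ({5,5} : Multiset ℕ) := by
  unfold c18
  rw [cycleType_mul _ _ (by decide) (by decide) (by decide), cycleType_formPerm _ (by decide) (by decide)]
  decide

theorem hord18 : orderOf c18 = 5 := by
  rw [← Equiv.Perm.lcm_cycleType, hct18]; decide

theorem hks18 : ∀ k, k < 5 → Nat.Coprime k 5 → EC (c18 ^ k) c18 ∨ EC (c18 ^ k) (c18 ^ 11) := by
  intro k hk hco
  interval_cases k
  · exact absurd hco (by decide)
  · exact Or.inl ⟨(1 : Equiv.Perm (Fin 10)), by decide, by decide⟩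
  · exact Or.inl ⟨(List.formPerm [1,3,4,2] * (List.formPerm [6,8,9,7])), by decide, by decide⟩
  · exact Or.inl ⟨(List.formPerm [1,2,4,3] * (List.formPerm [6,7,9,8])), by decide, by decide⟩
  · exact Or.inl ⟨(List.formPerm [1,4] * (List.formPerm [2,3] * (List.formPerm [6,9] * (List.formPerm [7,8])))), by decide, by decide⟩

def c19 : Equiv.Perm (Fin 10) := (List.formPerm [0,1,2,3,4,5] * (List.formPerm [6,7,8,9]))

theorem hct19 : Equiv.Perm.cycleType c19 = ({6,4} : Multiset ℕ) := by
  unfold c19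
  rw [cycleType_mul _ _ (by decide) (by decide) (by decide), cycleType_formPerm _ (by decide) (by decide)]
  decide

theorem hord19 : orderOf c19 = 12 := by
  rw [← Equiv.Perm.lcm_cycleType, hct19]; decide

theorem hks19 : ∀ k, k < 12 → Nat.Coprime k 12 → EC (c19 ^ k) c19 ∨ EC (c19 ^ k) (c19 ^ 11) := by
  intro k hk hco
  interval_cases k
  · exact absurd hco (by decide)
  · exact Or.inl ⟨(1 : Equiv.Perm (Fin 10)), by decide, by decide⟩
  · exact absurd hco (by decide)
  · exact absurd hco (by decide)
  · exact absurd hco (by decide)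
  · exact Or.inl ⟨(List.formPerm [1,5] * (List.formPerm [2,4])), by decide, by decide⟩
  · exact absurd hco (by decide)
  · exact Or.inl ⟨(List.formPerm [0,1,2,3,4,5] * (List.formPerm [7,9])), by decide, by decide⟩
  · exact absurd hco (by decide)
  · exact absurd hco (by decide)
  · exact absurd hco (by decide)
  · exact Or.inl ⟨(List.formPerm [0,1] * (List.formPerm [2,5] * (List.formPerm [3,4] * (List.formPerm [7,9])))), by decide, by decide⟩

def c20 : Equiv.Perm (Fin 10) := (List.formPerm [0,1,2,3,4,5,6] * (List.formPerm [7,8,9]))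

theorem hct20 : Equiv.Perm.cycleType c20 = ({7,3} : Multiset ℕ) := by
  unfold c20
  rw [cycleType_mul _ _ (by decide) (by decide) (by decide), cycleType_formPerm _ (by decide) (by decide)]
  decide

theorem hord20 : orderOf c20 = 21 := by
  rw [← Equiv.Perm.lcm_cycleType, hct20]; decide

theorem hks20 : ∀ k, k < 21 → Nat.Coprime k 21 → EC (c20 ^ k) c20 ∨ EC (c20 ^ k) (c20 ^ 11) := by
  intro k hk hco
  interval_cases k
  · exact absurd hco (by decide)
  · exact Or.inl ⟨(1 : Equiv.Perm (Fin 10)), by decide, by decide⟩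
  · exact Or.inr ⟨(List.formPerm [1,2,4] * (List.formPerm [3,6,5])), by decide, by decide⟩
  · exact absurd hco (by decide)
  · exact Or.inl ⟨(List.formPerm [1,2,4] * (List.formPerm [3,6,5])), by decide, by decide⟩
  · exact Or.inl ⟨(List.formPerm [1,3,2,6,4,5] * (List.formPerm [8,9])), by decide, by decide⟩
  · exact absurd hco (by decide)
  · exact absurd hco (by decide)
  · exact Or.inr ⟨(List.formPerm [1,4,2] * (List.formPerm [3,5,6])), by decide, by decide⟩
  · exact absurd hco (by decide)
  · exact Or.inr ⟨(List.formPerm [1,6] * (List.formPerm [2,5] * (List.formPerm [3,4] * (List.formPerm [8,9])))), by decide, by decide⟩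
  · exact Or.inr ⟨(1 : Equiv.Perm (Fin 10)), by decide, by decide⟩
  · exact absurd hco (by decide)
  · exact Or.inr ⟨(List.formPerm [1,3,2,6,4,5] * (List.formPerm [8,9])), by decide, by decide⟩
  · exact absurd hco (by decide)
  · exact absurd hco (by decide)
  · exact Or.inl ⟨(List.formPerm [1,4,2] * (List.formPerm [3,5,6])), by decide, by decide⟩
  · exact Or.inl ⟨(List.formPerm [1,5,4,6,2,3] * (List.formPerm [8,9])), by decide, by decide⟩
  · exact absurd hco (by decide)
  · exact Or.inr ⟨(List.formPerm [1,5,4,6,2,3] * (List.formPerm [8,9])), by decide, by decide⟩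
  · exact Or.inl ⟨(List.formPerm [1,6] * (List.formPerm [2,5] * (List.formPerm [3,4] * (List.formPerm [8,9])))), by decide, by decide⟩

def c21 : Equiv.Perm (Fin 10) := (List.formPerm [0,1,2,3,4,5,6,7] * (List.formPerm [8,9]))

theorem hct21 : Equiv.Perm.cycleType c21 = ({8,2} : Multiset ℕ) := by
  unfold c21
  rw [cycleType_mul _ _ (by decide) (by decide) (by decide), cycleType_formPerm _ (by decide) (by decide)]
  decide

theorem hord21 : orderOf c21 = 8 := by
  rw [← Equiv.Perm.lcm_cycleType, hct21]; decide

theorem hks21 : ∀ k, k < 8 → Nat.Coprime k 8 → EC (c21 ^ k) c21 ∨ EC (c21 ^ k) (c21 ^ 11) := by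
  intro k hk hco
  interval_cases k
  · exact absurd hco (by decide)
  · exact Or.inl ⟨(1 : Equiv.Perm (Fin 10)), by decide, by decide⟩
  · exact absurd hco (by decide)
  · exact Or.inl ⟨(List.formPerm [0,1,4,5] * (List.formPerm [2,7,6,3])), by decide, by decide⟩
  · exact absurd hco (by decide)
  · exact Or.inl ⟨(List.formPerm [1,5] * (List.formPerm [3,7])), by decide, by decide⟩
  · exact absurd hco (by decide)
  · exact Or.inl ⟨(List.formPerm [0,1] * (List.formPerm [2,7] * (List.formPerm [3,6] * (List.formPerm [4,5])))), by decide, by decide⟩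

theorem master (σ : Equiv.Perm (Fin 10)) (hs : Equiv.Perm.sign σ = 1) (k : ℕ)
    (hk : k < orderOf σ) (hco : Nat.Coprime k (orderOf σ)) :
    EC (σ ^ k) σ ∨ EC (σ ^ k) (σ ^ 11) := by
  have hmem := classify σ hs
  simp only [L_even, List.mem_cons, List.not_mem_nil, or_false] at hmem
  rcases hmem with h|h|h|h|h|h|h|h|h|h|h|h|h|h|h|h|h|h|h|h|h|h
  · exact of_rep (hct0.trans h.symm) (by rw [hord0]; exact hks0) hk hco
  · exact of_rep (hct1.trans h.symm) (by rw [hord1]; exact hks1) hk hco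
  · exact of_rep (hct2.trans h.symm) (by rw [hord2]; exact hks2) hk hco
  · exact of_rep (hct3.trans h.symm) (by rw [hord3]; exact hks3) hk hco
  · exact of_rep (hct4.trans h.symm) (by rw [hord4]; exact hks4) hk hco
  · exact of_rep (hct5.trans h.symm) (by rw [hord5]; exact hks5) hk hco
  · exact of_rep (hct6.trans h.symm) (by rw [hord6]; exact hks6) hk hco
  · exact of_rep (hct7.trans h.symm) (by rw [hord7]; exact hks7) hk hco
  · exact of_rep (hct8.trans h.symm) (by rw [hord8]; exact hks8) hk hco
  · exact of_rep (hct9.trans h.symm) (by rw [hord9]; exact hks9) hk hco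
  · exact of_rep (hct10.trans h.symm) (by rw [hord10]; exact hks10) hk hco
  · exact of_rep (hct11.trans h.symm) (by rw [hord11]; exact hks11) hk hco
  · exact of_rep (hct12.trans h.symm) (by rw [hord12]; exact hks12) hk hco
  · exact of_rep (hct13.trans h.symm) (by rw [hord13]; exact hks13) hk hco
  · exact of_rep (hct14.trans h.symm) (by rw [hord14]; exact hks14) hk hco
  · exact of_rep (hct15.trans h.symm) (by rw [hord15]; exact hks15) hk hco
  · exact of_rep (hct16.trans h.symm) (by rw [hord16]; exact hks16) hk hco
  · exact of_rep (hct17.trans h.symm) (by rw [hord17]; exact hks17) hk hco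
  · exact of_rep (hct18.trans h.symm) (by rw [hord18]; exact hks18) hk hco
  · exact of_rep (hct19.trans h.symm) (by rw [hord19]; exact hks19) hk hco
  · exact of_rep (hct20.trans h.symm) (by rw [hord20]; exact hks20) hk hco
  · exact of_rep (hct21.trans h.symm) (by rw [hord21]; exact hks21) hk hco


end AltTenSR

/-- A group `G` is `r`-semi-rational if every generator of the cyclic subgroup
generated by any `x ∈ G` is conjugate in `G` to `x` or to `x ^ r`. -/
def IsSemiRational (G : Type*) [Group G] (r : ℤ) : Prop :=
  ∀ x y : G, Subgroup.zpowers y = Subgroup.zpowers x → IsConj y x ∨ IsConj y (x ^ r)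

theorem alternatingGroup_ten_semiRational :
    IsSemiRational (alternatingGroup (Fin 10)) 11 := by
  intro x y h
  obtain ⟨m, hm⟩ := Subgroup.mem_zpowers_iff.1 (h ▸ Subgroup.mem_zpowers y)
  have hordyx : orderOf y = orderOf x := by
    rw [← Nat.card_zpowers, ← Nat.card_zpowers, h]
  set σ : Equiv.Perm (Fin 10) := (x : Equiv.Perm (Fin 10)) with hσdef
  have hsign : Equiv.Perm.sign σ = 1 := x.2
  have hn : 0 < orderOf σ := orderOf_pos σ
  set n := orderOf σ with hndef
  set k : ℕ := (m % (n : ℤ)).toNat with hkdef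
  have hk1 : (k : ℤ) = m % (n : ℤ) :=
    Int.toNat_of_nonneg (Int.emod_nonneg m (by exact_mod_cast hn.ne'))
  have hτ : (y : Equiv.Perm (Fin 10)) = σ ^ k := by
    rw [← hm, SubgroupClass.coe_zpow, ← zpow_natCast, hk1, hndef, zpow_mod_orderOf]
  have hordcoe : orderOf (σ ^ k) = n := by
    rw [← hτ, Subgroup.orderOf_coe, hordyx, hndef, hσdef, Subgroup.orderOf_coe]
  have hcop : Nat.Coprime k n := by
    have h1 : n / Nat.gcd n k = n := by rw [← orderOf_pow σ, hordcoe]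
    have h2 : Nat.gcd n k ∣ n := Nat.gcd_dvd_left n k
    rcases Nat.div_eq_self.1 h1 with h3 | h3
    · omega
    · exact Nat.Coprime.symm h3
  have hk2 : k < n := by
    have h2 : m % (n : ℤ) < (n : ℤ) := Int.emod_lt_of_pos m (by exact_mod_cast hn)
    omega
  rcases AltTenSR.master σ hsign k hk2 hcop with hEC | hEC
  · left
    exact AltTenSR.liftEC x y (by rwa [hτ])
  · right
    refine AltTenSR.liftEC (x ^ (11 : ℤ)) y ?_
    have hc : ((x ^ (11 : ℤ) : alternatingGroup (Fin 10)) : Equiv.Perm (Fin 10)) = σ ^ (11 : ℕ) := by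
      rw [SubgroupClass.coe_zpow]
      norm_cast
    rw [hc, hτ]
    exact hEC
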